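/- For any bijection r from length-ℓ bitstrings to {0,...,2^ℓ-1}, the point locality satisfies p_r ≤ 2^(ℓ-1). Equivalently, Σ_s Σ_i |r(ŝ_i) - r(s)| ≤ 2·ℓ·2^(2(ℓ-1)). -/

import Mathlib

open Finset

private lemma pl_strictMono_le {n : ℕ} {f : Fin n → ℕ} (hf : StrictMono f) :
    ∀ k (hk : k < n), k ≤ f ⟨k, hk⟩ := by
  intro k
  induction k with
  | zero => intro _; exact Nat.zero_le _
  | succ j ih =>
    intro hk
    have h1 : f ⟨j, by omega⟩ < f ⟨j + 1, hk⟩ := hf (by simp [Fin.lt_def])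
    have h2 := ih (by omega)
    omega

private lemma pl_sum_range_card_le (t : Finset ℕ) :
    ∑ k ∈ Finset.range t.card, k ≤ ∑ y ∈ t, y := by
  classical
  set e := t.orderEmbOfFin (rfl : t.card = t.card) with he
  have himg : (Finset.univ.image fun i : Fin t.card => e i) = t := by
    ext y
    simp only [Finset.mem_image, Finset.mem_univ, true_and]
    constructor
    · rintro ⟨i, rfl⟩; exact t.orderEmbOfFin_mem rfl i
    · intro hy
      have : y ∈ Set.range e := by
        rw [he]
        rw [Finset.range_orderEmbOfFin]
        exact hy
      exact this
  have hsum : ∑ y ∈ t, y = ∑ i : Fin t.card, e i := by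
    have h2 : ∑ y ∈ Finset.univ.image (fun i : Fin t.card => e i), y
        = ∑ i : Fin t.card, e i :=
      Finset.sum_image (fun a _ b _ h => e.injective h)
    rw [himg] at h2
    exact h2
  rw [hsum, ← Fin.sum_univ_eq_sum_range (fun k => k)]
  exact Finset.sum_le_sum fun i _ => pl_strictMono_le e.strictMono i.1 i.2

private lemma pl_flip_flip {ℓ : ℕ} (i : Fin ℓ) (s : Fin ℓ → Bool) :
    Function.update (Function.update s i (!s i)) i
      (!(Function.update s i (!s i) i)) = s := by
  simp [Function.update_idem]

private lemma pl_flip_ne {ℓ : ℕ} (i : Fin ℓ) (s : Fin ℓ → Bool) :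
    Function.update s i (!s i) ≠ s := by
  intro h
  have := congrFun h i
  simp at this

/-- key per-coordinate bound -/
private lemma pl_key (ℓ : ℕ) (hℓ : 1 ≤ ℓ) (r : (Fin ℓ → Bool) ≃ Fin (2 ^ ℓ)) (i : Fin ℓ) :
    (∑ s : Fin ℓ → Bool,
        (((r (Function.update s i (!s i)) : ℕ) : ℤ) - ((r s : ℕ) : ℤ)).natAbs)
      ≤ 2 * 2 ^ (2 * (ℓ - 1)) := by
  classical
  obtain ⟨m, hm⟩ : ∃ m, 2 ^ (ℓ - 1) = m := ⟨_, rfl⟩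
  have hm1 : 1 ≤ m := hm ▸ Nat.one_le_two_pow
  have hn : 2 ^ ℓ = 2 * m := by
    rw [← hm, ← pow_succ']
    congr 1
    omega
  set f : (Fin ℓ → Bool) → (Fin ℓ → Bool) := fun s => Function.update s i (!s i) with hf
  have hff : ∀ s, f (f s) = s := fun s => pl_flip_flip i s
  have hfne : ∀ s, f s ≠ s := fun s => pl_flip_ne i s
  have hfbij : Function.Bijective f := Function.Involutive.bijective hff
  set a : (Fin ℓ → Bool) → ℕ := fun s => (r s : ℕ) with ha
  have hainj : Function.Injective a := fun s t h => r.injective (Fin.val_injective h)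
  have hane : ∀ s, a (f s) ≠ a s := fun s h => hfne s (hainj h)
  have hgoal : 2 * 2 ^ (2 * (ℓ - 1)) = 2 * m * m := by
    rw [← hm, show 2 * (ℓ - 1) = (ℓ - 1) * 2 by ring, pow_mul]
    ring
  rw [hgoal]
  obtain ⟨X, hX⟩ : ∃ X, ∑ s : Fin ℓ → Bool, (((a (f s) : ℤ)) - (a s : ℤ)).natAbs = X :=
    ⟨_, rfl⟩
  rw [hX]
  obtain ⟨M, hM⟩ : ∃ M, ∑ s : Fin ℓ → Bool, min (a (f s)) (a s) = M := ⟨_, rfl⟩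
  obtain ⟨S, hS⟩ : ∃ S, ∑ s : Fin ℓ → Bool, a s = S := ⟨_, rfl⟩
  have hfa : ∑ s : Fin ℓ → Bool, a (f s) = S := by
    rw [← hS]
    exact Fintype.sum_bijective f hfbij _ _ (fun x => rfl)
  -- pointwise identity summed
  have hXM : X + 2 * M = 2 * S := by
    have hpt : ∀ s : Fin ℓ → Bool,
        (((a (f s) : ℤ)) - (a s : ℤ)).natAbs + 2 * min (a (f s)) (a s)
          = a (f s) + a s := fun s => by omega
    have h2 : ∑ s : Fin ℓ → Bool,
        ((((a (f s) : ℤ)) - (a s : ℤ)).natAbs + 2 * min (a (f s)) (a s))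
        = ∑ s : Fin ℓ → Bool, (a (f s) + a s) :=
      Finset.sum_congr rfl fun s _ => hpt s
    rw [Finset.sum_add_distrib, Finset.sum_add_distrib, ← Finset.mul_sum,
      hfa, hS, hX, hM] at h2
    omega
  -- total sum value
  have hStot : S * 2 = 2 * m * (2 * m - 1) := by
    have h1 : ∑ s : Fin ℓ → Bool, a s = ∑ j : Fin (2 ^ ℓ), (j : ℕ) :=
      Equiv.sum_comp r (fun j : Fin (2 ^ ℓ) => (j : ℕ))
    rw [hS] at h1
    rw [h1, Fin.sum_univ_eq_sum_range (fun k => k), Finset.sum_range_id_mul_two, hn]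
  -- the "lower half" set
  set L := Finset.univ.filter (fun s : Fin ℓ → Bool => a s < a (f s)) with hL
  have hmemL : ∀ s, s ∈ L ↔ a s < a (f s) := by
    intro s; simp [hL]
  have hmemNL : ∀ s, s ∈ Finset.univ.filter
      (fun s : Fin ℓ → Bool => ¬ a s < a (f s)) ↔ a (f s) < a s := by
    intro s
    simp only [Finset.mem_filter, Finset.mem_univ, true_and, not_lt]
    exact ⟨fun h => lt_of_le_of_ne h (hane s), fun h => le_of_lt h⟩
  -- M = 2 * (sum over L)
  have hMsplit : M = 2 * ∑ s ∈ L, a s := by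
    rw [← hM, ← Finset.sum_filter_add_sum_filter_not Finset.univ
      (fun s : Fin ℓ → Bool => a s < a (f s))]
    have h1 : ∑ s ∈ L, min (a (f s)) (a s) = ∑ s ∈ L, a s :=
      Finset.sum_congr rfl fun s hs => min_eq_right (le_of_lt ((hmemL s).mp hs))
    have h2 : ∑ s ∈ Finset.univ.filter (fun s : Fin ℓ → Bool => ¬ a s < a (f s)),
        min (a (f s)) (a s) = ∑ s ∈ L, a s := by
      rw [Finset.sum_congr rfl fun s hs => min_eq_left (le_of_lt ((hmemNL s).mp hs))]
      refine Finset.sum_nbij' (fun s => f s) (fun s => f s) ?_ ?_ ?_ ?_ ?_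
      · intro s hs
        rw [hmemL, hff]
        exact (hmemNL s).mp hs
      · intro s hs
        rw [hmemNL, hff]
        exact (hmemL s).mp hs
      · intro s _; exact hff s
      · intro s _; exact hff s
      · intro s _; rfl
    rw [← hL, h1, h2]
    ring
  -- card of L
  have hcardL : L.card = m := by
    have hc1 : (Finset.univ.filter
        (fun s : Fin ℓ → Bool => ¬ a s < a (f s))).card = L.card := by
      refine Finset.card_nbij' (fun s => f s) (fun s => f s) ?_ ?_ ?_ ?_
      · intro s hs
        simp only [Finset.mem_coe]
        rw [hmemL, hff]
        exact (hmemNL s).mp hs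
      · intro s hs
        simp only [Finset.mem_coe]
        rw [hmemNL, hff]
        exact (hmemL s).mp hs
      · intro s _; exact hff s
      · intro s _; exact hff s
    have hc2 := Finset.card_filter_add_card_filter_not
      (s := (Finset.univ : Finset (Fin ℓ → Bool)))
      (p := fun s : Fin ℓ → Bool => a s < a (f s))
    have hcu : (Finset.univ : Finset (Fin ℓ → Bool)).card = 2 * m := by
      rw [Finset.card_univ]
      simp only [Fintype.card_fun, Fintype.card_fin, Fintype.card_bool]
      rw [← hn]
    rw [hcu, hc1, ← hL] at hc2
    omega
  -- lower bound on sum over L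
  have hLlow : ∑ k ∈ Finset.range m, k ≤ ∑ s ∈ L, a s := by
    have h := pl_sum_range_card_le (L.image a)
    rw [Finset.card_image_of_injective _ hainj, hcardL,
      Finset.sum_image (fun x _ y _ h => hainj h)] at h
    exact h
  have hB : (∑ k ∈ Finset.range m, k) * 2 = m * (m - 1) :=
    Finset.sum_range_id_mul_two m
  -- put everything together
  obtain ⟨m', rfl⟩ : ∃ m', m = m' + 1 := ⟨m - 1, by omega⟩
  obtain ⟨SL, hSL⟩ : ∃ SL, ∑ s ∈ L, a s = SL := ⟨_, rfl⟩
  obtain ⟨B, hB'⟩ : ∃ B, ∑ k ∈ Finset.range (m' + 1), k = B := ⟨_, rfl⟩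
  rw [hSL] at hMsplit hLlow
  rw [hB'] at hB hLlow
  have hB2 : B * 2 = (m' + 1) * m' := by simpa using hB
  rw [show 2 * (m' + 1) - 1 = 2 * m' + 1 from by omega] at hStot
  have hkey : X + 4 * B ≤ 2 * S := by omega
  have hring : 2 * (m' + 1) * (2 * m' + 1)
      = 2 * (m' + 1) * (m' + 1) + 2 * ((m' + 1) * m') := by ring
  nlinarith [hkey, hStot, hB2, hring]

theorem point_locality_upper_bound (ℓ : ℕ) (hℓ : 1 ≤ ℓ)
    (r : (Fin ℓ → Bool) ≃ Fin (2 ^ ℓ)) :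
    (∑ s : Fin ℓ → Bool, ∑ i : Fin ℓ,
        (((r (Function.update s i (!s i)) : ℕ) : ℤ) - ((r s : ℕ) : ℤ)).natAbs)
      ≤ 2 * ℓ * 2 ^ (2 * (ℓ - 1)) := by
  rw [Finset.sum_comm]
  calc (∑ i : Fin ℓ, ∑ s : Fin ℓ → Bool,
        (((r (Function.update s i (!s i)) : ℕ) : ℤ) - ((r s : ℕ) : ℤ)).natAbs)
      ≤ ∑ _i : Fin ℓ, 2 * 2 ^ (2 * (ℓ - 1)) :=
        Finset.sum_le_sum fun i _ => pl_key ℓ hℓ r i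
    _ = 2 * ℓ * 2 ^ (2 * (ℓ - 1)) := by
        simp [Finset.sum_const, Finset.card_univ]; ring
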